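/- Let X and Y be complex m×n matrices, and let σ_1(X) ≥ σ_2(X) ≥ … ≥ σ_min(m,n)(X) and σ_1(Y) ≥ … ≥ σ_min(m,n)(Y) denote their singular values in nonincreasing order. Then (∑_{i=1}^{min(m,n)} |σ_i(X) − σ_i(Y)|²)^{1/2} ≤ ‖X − Y‖_F, where ‖·‖_F denotes the Frobenius norm. -/

import Mathlib

open Matrix Finset
open scoped ComplexOrder ComplexInnerProductSpace
private lemma key_dot {m n : ℕ} (X : Matrix (Fin m) (Fin n) ℂ) (i j : Fin n) :
    star (X *ᵥ ⇑((Matrix.isHermitian_conjTranspose_mul_self X).eigenvectorBasis i)) ⬝ᵥ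
      (X *ᵥ ⇑((Matrix.isHermitian_conjTranspose_mul_self X).eigenvectorBasis j))
    = if i = j then (((Matrix.isHermitian_conjTranspose_mul_self X).eigenvalues j : ℝ) : ℂ) else 0 := by
  set hH := Matrix.isHermitian_conjTranspose_mul_self X
  set v : Fin n → (Fin n → ℂ) := fun j => ⇑(hH.eigenvectorBasis j) with hv
  have horth : ∀ i j : Fin n, star (v i) ⬝ᵥ v j = if i = j then (1:ℂ) else 0 := by
    intro i j
    have := orthonormal_iff_ite.mp hH.eigenvectorBasis.orthonormal i j
    rw [EuclideanSpace.inner_eq_star_dotProduct] at this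
    rw [dotProduct_comm]; exact this
  calc star (X *ᵥ v i) ⬝ᵥ (X *ᵥ v j)
      = (star (v i) ᵥ* Xᴴ) ⬝ᵥ (X *ᵥ v j) := by rw [star_mulVec]
    _ = star (v i) ⬝ᵥ (Xᴴ *ᵥ (X *ᵥ v j)) := (dotProduct_mulVec _ _ _).symm
    _ = star (v i) ⬝ᵥ ((Xᴴ * X) *ᵥ v j) := by rw [mulVec_mulVec]
    _ = star (v i) ⬝ᵥ (hH.eigenvalues j • v j) := by rw [hH.mulVec_eigenvectorBasis]
    _ = hH.eigenvalues j • (star (v i) ⬝ᵥ v j) := dotProduct_smul _ _ _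
    _ = if i = j then ((hH.eigenvalues j : ℝ) : ℂ) else 0 := by
        rw [horth i j]
        split <;> simp [Complex.real_smul]


/-- The singular values of a complex `m × n` matrix, as the nonnegative square roots of the
eigenvalues of `Xᴴ * X` (in some order, given by the eigenvalue enumeration of Mathlib). -/
noncomputable def singValsUnordered {m n : ℕ} (X : Matrix (Fin m) (Fin n) ℂ) : Fin n → ℝ :=
  fun j => Real.sqrt ((Matrix.isHermitian_conjTranspose_mul_self X).eigenvalues j)


private noncomputable def evec {m n : ℕ} (X : Matrix (Fin m) (Fin n) ℂ) (j : Fin n) :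
    Fin n → ℂ :=
  ⇑((Matrix.isHermitian_conjTranspose_mul_self X).eigenvectorBasis j)

private noncomputable def nvec {m n : ℕ} (X : Matrix (Fin m) (Fin n) ℂ) (j : Fin n) :
    Fin m → ℂ :=
  if singValsUnordered X j = 0 then 0
  else ((singValsUnordered X j : ℝ) : ℂ)⁻¹ • (X *ᵥ evec X j)

private lemma sing_nonneg {m n : ℕ} (X : Matrix (Fin m) (Fin n) ℂ) (j : Fin n) :
    0 ≤ singValsUnordered X j := Real.sqrt_nonneg _

private lemma sing_sq {m n : ℕ} (X : Matrix (Fin m) (Fin n) ℂ) (j : Fin n) :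
    singValsUnordered X j ^ 2 = (Matrix.isHermitian_conjTranspose_mul_self X).eigenvalues j :=
  Real.sq_sqrt ((Matrix.posSemidef_conjTranspose_mul_self X).eigenvalues_nonneg j)

private lemma key_dot' {m n : ℕ} (X : Matrix (Fin m) (Fin n) ℂ) (i j : Fin n) :
    star (X *ᵥ evec X i) ⬝ᵥ (X *ᵥ evec X j)
      = if i = j then ((singValsUnordered X j ^ 2 : ℝ) : ℂ) else 0 := by
  rw [sing_sq]
  exact key_dot X i j

private lemma mulVec_evec {m n : ℕ} (X : Matrix (Fin m) (Fin n) ℂ) (j : Fin n) :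
    X *ᵥ evec X j = ((singValsUnordered X j : ℝ) : ℂ) • nvec X j := by
  rcases eq_or_ne (singValsUnordered X j) 0 with h | h
  · have h2 : star (X *ᵥ evec X j) ⬝ᵥ (X *ᵥ evec X j) = 0 := by
      rw [key_dot' X j j, if_pos rfl, h]; norm_num
    have h3 : X *ᵥ evec X j = 0 := dotProduct_star_self_eq_zero.mp h2
    rw [h3, h]
    simp [nvec, h]
  · rw [nvec, if_neg h, smul_smul, mul_inv_cancel₀ (by exact_mod_cast h), one_smul]

private lemma nvec_dot {m n : ℕ} (X : Matrix (Fin m) (Fin n) ℂ) (i j : Fin n) :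
    star (nvec X i) ⬝ᵥ nvec X j
      = if i = j then (if singValsUnordered X i = 0 then 0 else 1) else 0 := by
  rcases eq_or_ne (singValsUnordered X i) 0 with hi | hi
  · rw [nvec, if_pos hi]
    simp only [star_zero, zero_dotProduct]
    rcases eq_or_ne i j with h | h
    · rw [if_pos h, if_pos hi]
    · rw [if_neg h]
  · rcases eq_or_ne (singValsUnordered X j) 0 with hj | hj
    · rw [nvec, nvec, if_pos hj]
      simp only [dotProduct_zero, dotProduct_smul, smul_zero]
      rcases eq_or_ne i j with h | h
      · exact absurd hj (h ▸ hi)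
      · rw [if_neg h]
    · rw [nvec, nvec, if_neg hi, if_neg hj]
      rw [star_smul, smul_dotProduct, dotProduct_smul, key_dot' X i j]
      have hjc : ((singValsUnordered X j : ℝ) : ℂ) ≠ 0 := by exact_mod_cast hj
      rcases eq_or_ne i j with h | h
      · subst h
        rw [if_pos rfl, if_pos rfl, if_neg hi]
        simp only [smul_eq_mul, star_inv₀, RCLike.star_def, Complex.conj_ofReal, pow_two,
          Complex.ofReal_mul]
        field_simp
      · rw [if_neg h, if_neg h]
        simp

private lemma bessel_generic {N M : ℕ} (w : Fin N → Fin M → ℂ) (c : Fin N → ℝ)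
    (hw : ∀ i j, star (w i) ⬝ᵥ w j = if i = j then (if c i = 0 then 0 else 1) else 0)
    (x : Fin M → ℂ) (hx : (star x ⬝ᵥ x).re ≤ 1) :
    ∑ k : Fin N, ‖star (w k) ⬝ᵥ x‖ ^ 2 ≤ 1 := by
  classical
  set toE := (WithLp.equiv 2 (Fin M → ℂ)).symm with htoE
  set p : Fin N → Prop := fun k => c k ≠ 0 with hp
  set fam : {k // p k} → EuclideanSpace ℂ (Fin M) := fun k => toE (w k.1) with hfam
  have horth : Orthonormal ℂ fam := by
    rw [orthonormal_iff_ite]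
    intro i j
    have h0 : (inner ℂ (fam i) (fam j) : ℂ) = star (w i.1) ⬝ᵥ w j.1 :=
      (EuclideanSpace.inner_toLp_toLp _ _).trans (dotProduct_comm _ _)
    rw [h0, hw]
    rcases eq_or_ne i j with h | h
    · rw [if_pos (congrArg Subtype.val h), if_pos h, if_neg i.2]
    · rw [if_neg (fun hc => h (Subtype.ext hc)), if_neg h]
  have hnorm : ‖toE x‖ ^ 2 ≤ 1 := by
    have h1 : (‖toE x‖ : ℝ) ^ 2 = RCLike.re (inner ℂ (toE x) (toE x) : ℂ) := by
      rw [← @inner_self_eq_norm_sq ℂ]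
    have h2 : (inner ℂ (toE x) (toE x) : ℂ) = star x ⬝ᵥ x := (EuclideanSpace.inner_toLp_toLp _ _).trans (dotProduct_comm _ _)
    rw [h1, h2]
    exact hx
  have hbessel := horth.sum_inner_products_le (s := Finset.univ) (toE x)
  have hzero : ∀ k ∈ Finset.univ.filter (fun k => ¬ p k),
      ‖star (w k) ⬝ᵥ x‖ ^ 2 = 0 := by
    intro k hk
    have hc : c k = 0 := not_not.mp (Finset.mem_filter.1 hk).2
    have h1 : star (w k) ⬝ᵥ w k = 0 := by rw [hw, if_pos rfl, if_pos hc]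
    have h2 : w k = 0 := dotProduct_star_self_eq_zero.mp h1
    rw [h2]
    simp
  calc ∑ k : Fin N, ‖star (w k) ⬝ᵥ x‖ ^ 2
      = ∑ k ∈ Finset.univ.filter p, ‖star (w k) ⬝ᵥ x‖ ^ 2 := by
        rw [← Finset.sum_filter_add_sum_filter_not Finset.univ p,
          Finset.sum_congr rfl hzero, Finset.sum_const_zero, add_zero]
    _ = ∑ k : {k // p k}, ‖(inner ℂ (fam k) (toE x) : ℂ)‖ ^ 2 := by
        rw [← Finset.sum_subtype_eq_sum_filter]
        refine Finset.sum_congr (by simp) fun k _ => ?_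
        have h3 : (inner ℂ (fam k) (toE x) : ℂ) = star (w k.1) ⬝ᵥ x :=
          (EuclideanSpace.inner_toLp_toLp _ _).trans (dotProduct_comm _ _)
        rw [h3]
    _ ≤ ‖toE x‖ ^ 2 := hbessel
    _ ≤ 1 := hnorm

private lemma evec_dot {m n : ℕ} (X : Matrix (Fin m) (Fin n) ℂ) (i j : Fin n) :
    star (evec X i) ⬝ᵥ evec X j = if i = j then 1 else 0 := by
  have := orthonormal_iff_ite.mp
    (Matrix.isHermitian_conjTranspose_mul_self X).eigenvectorBasis.orthonormal i j
  rw [EuclideanSpace.inner_eq_star_dotProduct] at this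
  rw [dotProduct_comm]; exact this

private lemma trace_repr {m n : ℕ} (X Y : Matrix (Fin m) (Fin n) ℂ) :
    Matrix.trace (Xᴴ * Y) = ∑ j : Fin n, ∑ k : Fin n,
      (star (X *ᵥ ⇑((Matrix.isHermitian_conjTranspose_mul_self X).eigenvectorBasis j)) ⬝ᵥ
        (Y *ᵥ ⇑((Matrix.isHermitian_conjTranspose_mul_self Y).eigenvectorBasis k)))
      * (star ⇑((Matrix.isHermitian_conjTranspose_mul_self Y).eigenvectorBasis k) ⬝ᵥ
        ⇑((Matrix.isHermitian_conjTranspose_mul_self X).eigenvectorBasis j)) := by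
  set hHX := Matrix.isHermitian_conjTranspose_mul_self X
  set hHY := Matrix.isHermitian_conjTranspose_mul_self Y
  set v : Fin n → (Fin n → ℂ) := fun j => ⇑(hHX.eigenvectorBasis j) with hv
  set w : Fin n → (Fin n → ℂ) := fun k => ⇑(hHY.eigenvectorBasis k) with hw
  set V : Matrix (Fin n) (Fin n) ℂ := (hHX.eigenvectorUnitary : Matrix (Fin n) (Fin n) ℂ)
  set W : Matrix (Fin n) (Fin n) ℂ := (hHY.eigenvectorUnitary : Matrix (Fin n) (Fin n) ℂ)
  have hVu : V * Vᴴ = 1 := by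
    rw [← Matrix.star_eq_conjTranspose]
    exact Matrix.mem_unitaryGroup_iff.mp hHX.eigenvectorUnitary.2
  have hWu : W * Wᴴ = 1 := by
    rw [← Matrix.star_eq_conjTranspose]
    exact Matrix.mem_unitaryGroup_iff.mp hHY.eigenvectorUnitary.2
  have hVapp : ∀ a j, V a j = v j a := fun a j => rfl
  have hWapp : ∀ a k, W a k = w k a := fun a k => rfl
  set C : Matrix (Fin n) (Fin n) ℂ := Vᴴ * (Xᴴ * Y) * W with hC
  set M : Matrix (Fin n) (Fin n) ℂ := Wᴴ * V with hM
  have h1 : C * M = Vᴴ * (Xᴴ * Y) * V := by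
    rw [hC, hM, Matrix.mul_assoc (Vᴴ * (Xᴴ * Y)) W (Wᴴ * V), ← Matrix.mul_assoc W Wᴴ V, hWu,
      Matrix.one_mul]
  have h2 : Matrix.trace (C * M) = Matrix.trace (Xᴴ * Y) := by
    rw [h1, Matrix.trace_mul_cycle, hVu, Matrix.one_mul]
  have h3 : Matrix.trace (C * M) = ∑ j : Fin n, ∑ k : Fin n, C j k * M k j := by
    simp [Matrix.trace, Matrix.diag, Matrix.mul_apply]
  have h4 : ∀ j k, C j k = star (X *ᵥ v j) ⬝ᵥ (Y *ᵥ w k) := by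
    intro j k
    have step1 : C j k = star (v j) ⬝ᵥ ((Xᴴ * Y) *ᵥ w k) := by
      simp only [hC, Matrix.mul_apply, Matrix.mulVec, dotProduct,
        Matrix.conjTranspose_apply, Pi.star_apply, Finset.mul_sum, Finset.sum_mul]
      rw [Finset.sum_comm]
      refine Finset.sum_congr rfl fun a _ => Finset.sum_congr rfl fun b _ =>
        Finset.sum_congr rfl fun i _ => ?_
      rw [hVapp, hWapp]
      ring
    rw [step1, star_mulVec, ← dotProduct_mulVec, mulVec_mulVec]
  have h5 : ∀ j k, M k j = star (w k) ⬝ᵥ v j := by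
    intro j k
    simp only [hM, Matrix.mul_apply, dotProduct, Matrix.conjTranspose_apply,
      Pi.star_apply]
    exact Finset.sum_congr rfl fun a _ => by rw [hVapp, hWapp]
  rw [← h2, h3]
  exact Finset.sum_congr rfl fun j _ => Finset.sum_congr rfl fun k _ => by rw [h4, h5]

private lemma tele (α : ℕ → ℝ) {j n : ℕ} (hj : j ≤ n) :
    ∑ t ∈ Finset.Ico j n, (α t - α (t + 1)) = α j - α n := by
  rw [Finset.sum_Ico_eq_sub _ hj, Finset.sum_range_sub' α, Finset.sum_range_sub' α]
  ring

/-- Abel summation comparison: if partial sums of `c` are dominated by those of `d`,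
then the `α`-weighted sums compare, for `α` antitone with `α n = 0`. -/
private lemma abel_le {n : ℕ} (α : ℕ → ℝ) (hα : Antitone α) (hαn : α n = 0) (c d : ℕ → ℝ)
    (h : ∀ t ∈ range n, ∑ j ∈ range (t + 1), c j ≤ ∑ j ∈ range (t + 1), d j) :
    ∑ j ∈ range n, α j * c j ≤ ∑ j ∈ range n, α j * d j := by
  have key : ∀ c : ℕ → ℝ, ∑ j ∈ range n, α j * c j
      = ∑ t ∈ range n, (α t - α (t + 1)) * ∑ j ∈ range (t + 1), c j := by
    intro c
    have h1 : ∀ j ∈ range n, α j * c j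
        = ∑ t ∈ range n, (if j ≤ t then (α t - α (t + 1)) * c j else 0) := by
      intro j hj
      rw [← Finset.sum_filter]
      have : (range n).filter (j ≤ ·) = Finset.Ico j n := by
        ext t; simp [Finset.mem_filter, Finset.mem_Ico, and_comm]
      rw [this, ← Finset.sum_mul, tele α (mem_range.1 hj).le, hαn, sub_zero]
    rw [Finset.sum_congr rfl h1, Finset.sum_comm]
    refine Finset.sum_congr rfl fun t ht => ?_
    have h2 : ∀ j, (if j ≤ t then (α t - α (t + 1)) * c j else 0)
        = (α t - α (t + 1)) * (if j ≤ t then c j else 0) := by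
      intro j; split <;> simp
    rw [Finset.sum_congr rfl fun j _ => h2 j, ← Finset.mul_sum]
    congr 1
    rw [← Finset.sum_filter]
    refine Finset.sum_congr ?_ fun _ _ => rfl
    ext j
    simp only [Finset.mem_filter, Finset.mem_range, Nat.lt_succ_iff]
    exact ⟨fun ⟨_, h2⟩ => h2, fun hj => ⟨hj.trans_lt (mem_range.1 ht), hj⟩⟩
  rw [key c, key d]
  refine Finset.sum_le_sum fun t ht => ?_
  exact mul_le_mul_of_nonneg_left (h t ht) (sub_nonneg.2 (hα (Nat.le_succ t)))

/-- Rearrangement bound for doubly substochastic matrices. -/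
private lemma substoch_nat {n : ℕ} (α β : ℕ → ℝ) (hα : Antitone α) (hβ : Antitone β)
    (hαn : α n = 0) (hβn : β n = 0) (S : ℕ → ℕ → ℝ) (hS0 : ∀ j k, 0 ≤ S j k)
    (hrow : ∀ j, ∑ k ∈ range n, S j k ≤ 1) (hcol : ∀ k, ∑ j ∈ range n, S j k ≤ 1) :
    ∑ j ∈ range n, ∑ k ∈ range n, α j * (β k * S j k) ≤ ∑ j ∈ range n, α j * β j := by
  have hstep : ∀ j ∈ range n, ∑ k ∈ range n, α j * (β k * S j k)
      = α j * ∑ k ∈ range n, β k * S j k := fun j _ => by rw [Finset.mul_sum]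
  rw [Finset.sum_congr rfl hstep]
  refine abel_le α hα hαn _ _ fun t ht => ?_
  have ht' : t < n := mem_range.1 ht
  -- swap the inner double sum
  have hswap : ∑ j ∈ range (t + 1), ∑ k ∈ range n, β k * S j k
      = ∑ k ∈ range n, β k * ∑ j ∈ range (t + 1), S j k := by
    rw [Finset.sum_comm]
    exact Finset.sum_congr rfl fun k _ => by rw [Finset.mul_sum]
  rw [hswap]
  have hd : ∑ j ∈ range (t + 1), β j
      = ∑ k ∈ range n, β k * (if k ≤ t then 1 else 0) := by
    rw [← Finset.sum_filter_add_sum_filter_not (range n) (· ≤ t)]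
    have h1 : (range n).filter (· ≤ t) = range (t + 1) := by
      ext j
      simp only [Finset.mem_filter, Finset.mem_range, Nat.lt_succ_iff]
      exact ⟨fun ⟨_, h2⟩ => h2, fun hj => ⟨hj.trans_lt ht', hj⟩⟩
    have h2 : ∀ j ∈ (range n).filter (· ≤ t), β j * (if j ≤ t then 1 else 0) = β j := by
      intro j hj; rw [if_pos (mem_filter.1 hj).2, mul_one]
    have h3 : ∀ j ∈ (range n).filter (¬ · ≤ t), β j * (if j ≤ t then 1 else 0) = 0 := by
      intro j hj; rw [if_neg (mem_filter.1 hj).2, mul_zero]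
    rw [Finset.sum_congr rfl h2, Finset.sum_congr rfl h3, Finset.sum_const_zero, add_zero, h1]
  rw [hd]
  refine abel_le β hβ hβn _ _ fun s hs => ?_
  have hs' : s < n := mem_range.1 hs
  -- partial sums comparison
  have hcount : ∀ u : ℕ, ∑ k ∈ range (u + 1), (if k ≤ t then (1:ℝ) else 0)
      = (min u t + 1 : ℕ) := by
    intro u
    rw [← Finset.sum_filter]
    have : (range (u + 1)).filter (· ≤ t) = range (min u t + 1) := by
      ext j; simp only [Finset.mem_filter, Finset.mem_range, Nat.lt_succ_iff, le_min_iff]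
      try omega
    rw [this, Finset.sum_const, Finset.card_range, nsmul_eq_mul, mul_one]
  rw [hcount s]
  rcases le_total s t with h | h
  · -- use column sums
    have : ∑ k ∈ range (s + 1), ∑ j ∈ range (t + 1), S j k ≤ ∑ k ∈ range (s + 1), 1 := by
      refine Finset.sum_le_sum fun k _ => ?_
      calc ∑ j ∈ range (t + 1), S j k ≤ ∑ j ∈ range n, S j k :=
            Finset.sum_le_sum_of_subset_of_nonneg
              (Finset.range_subset_range.2 ht') (fun j _ _ => hS0 j k)
        _ ≤ 1 := hcol k
    calc ∑ k ∈ range (s + 1), ∑ j ∈ range (t + 1), S j k ≤ ∑ k ∈ range (s + 1), 1 := this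
      _ = ((min s t + 1 : ℕ) : ℝ) := by
          rw [Finset.sum_const, Finset.card_range, nsmul_eq_mul, mul_one, min_eq_left h]
  · -- use row sums
    rw [Finset.sum_comm]
    have : ∑ j ∈ range (t + 1), ∑ k ∈ range (s + 1), S j k ≤ ∑ j ∈ range (t + 1), 1 := by
      refine Finset.sum_le_sum fun j _ => ?_
      calc ∑ k ∈ range (s + 1), S j k ≤ ∑ k ∈ range n, S j k :=
            Finset.sum_le_sum_of_subset_of_nonneg
              (Finset.range_subset_range.2 hs') (fun k _ _ => hS0 j k)
        _ ≤ 1 := hrow j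
    calc ∑ j ∈ range (t + 1), ∑ k ∈ range (s + 1), S j k ≤ ∑ j ∈ range (t + 1), 1 := this
      _ = ((min s t + 1 : ℕ) : ℝ) := by
          rw [Finset.sum_const, Finset.card_range, nsmul_eq_mul, mul_one, min_eq_right h]

private lemma substoch_fin {n : ℕ} (α β : Fin n → ℝ) (hα : Antitone α) (hβ : Antitone β)
    (hα0 : ∀ j, 0 ≤ α j) (hβ0 : ∀ j, 0 ≤ β j) (S : Fin n → Fin n → ℝ)
    (hS0 : ∀ j k, 0 ≤ S j k) (hrow : ∀ j, ∑ k, S j k ≤ 1) (hcol : ∀ k, ∑ j, S j k ≤ 1) :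
    ∑ j, ∑ k, α j * (β k * S j k) ≤ ∑ j, α j * β j := by
  set α' : ℕ → ℝ := fun t => if h : t < n then α ⟨t, h⟩ else 0 with hα'
  set β' : ℕ → ℝ := fun t => if h : t < n then β ⟨t, h⟩ else 0 with hβ'
  set S' : ℕ → ℕ → ℝ := fun t s =>
    if ht : t < n then (if hs : s < n then S ⟨t, ht⟩ ⟨s, hs⟩ else 0) else 0 with hS'
  have hα'e : ∀ i : Fin n, α' i = α i := fun i => by simp [hα', i.isLt]
  have hβ'e : ∀ i : Fin n, β' i = β i := fun i => by simp [hβ', i.isLt]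
  have hS'e : ∀ i k : Fin n, S' i k = S i k := fun i k => by simp [hS', i.isLt, k.isLt]
  have hanti : ∀ (γ : Fin n → ℝ), Antitone γ → (∀ j, 0 ≤ γ j) →
      Antitone (fun t => if h : t < n then γ ⟨t, h⟩ else 0) := by
    intro γ hγ hγ0 a b hab
    dsimp only
    rcases lt_or_ge b n with hb | hb
    · rw [dif_pos hb, dif_pos (lt_of_le_of_lt hab hb)]
      exact hγ (Fin.mk_le_mk.mpr hab)
    · rw [dif_neg (Nat.not_lt.2 hb)]
      split
      · exact hγ0 _
      · exact le_refl 0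
  have key := substoch_nat α' β' (hanti α hα hα0) (hanti β hβ hβ0)
    (by simp only [hα']; rw [dif_neg (lt_irrefl n)])
    (by simp only [hβ']; rw [dif_neg (lt_irrefl n)]) S'
    (fun j k => by
      simp only [hS']
      split
      · split
        · exact hS0 _ _
        · exact le_refl 0
      · exact le_refl 0)
    (fun t => by
      rcases lt_or_ge t n with ht | ht
      · rw [← Fin.sum_univ_eq_sum_range (fun k => S' t k) n]
        calc ∑ k : Fin n, S' t k = ∑ k : Fin n, S ⟨t, ht⟩ k := by
              refine Finset.sum_congr rfl fun k _ => ?_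
              simp [hS', ht, k.isLt]
          _ ≤ 1 := hrow _
      · have : ∀ k ∈ range n, S' t k = 0 := fun k _ => by simp [hS', Nat.not_lt.2 ht]
        rw [Finset.sum_congr rfl this, Finset.sum_const_zero]; norm_num)
    (fun s => by
      rcases lt_or_ge s n with hs | hs
      · rw [← Fin.sum_univ_eq_sum_range (fun j => S' j s) n]
        calc ∑ j : Fin n, S' j s = ∑ j : Fin n, S j ⟨s, hs⟩ := by
              refine Finset.sum_congr rfl fun j _ => ?_
              simp [hS', hs, j.isLt]
          _ ≤ 1 := hcol _
      · have : ∀ j ∈ range n, S' j s = 0 := fun j _ => by simp [hS', Nat.not_lt.2 hs]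
        rw [Finset.sum_congr rfl this, Finset.sum_const_zero]; norm_num)
  calc ∑ j, ∑ k, α j * (β k * S j k)
      = ∑ j ∈ range n, ∑ k ∈ range n, α' j * (β' k * S' j k) := by
        rw [← Fin.sum_univ_eq_sum_range (fun j => ∑ k ∈ range n, α' j * (β' k * S' j k)) n]
        refine Finset.sum_congr rfl fun j _ => ?_
        rw [← Fin.sum_univ_eq_sum_range (fun k => α' j * (β' k * S' j k)) n]
        refine Finset.sum_congr rfl fun k _ => ?_
        rw [hα'e, hβ'e, hS'e]
    _ ≤ ∑ j ∈ range n, α' j * β' j := key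
    _ = ∑ j, α j * β j := by
        rw [← Fin.sum_univ_eq_sum_range (fun j => α' j * β' j) n]
        exact Finset.sum_congr rfl fun j _ => by rw [hα'e, hβ'e]


private lemma abs_dot_flip {M : ℕ} (a b : Fin M → ℂ) :
    ‖star a ⬝ᵥ b‖ = ‖star b ⬝ᵥ a‖ := by
  have h : (starRingEnd ℂ) (star a ⬝ᵥ b) = star b ⬝ᵥ a := by
    rw [← RCLike.star_def, star_dotProduct, star_star]
  rw [← h, Complex.norm_conj]

private lemma vonNeumann {m n : ℕ} (X Y : Matrix (Fin m) (Fin n) ℂ)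
    (σX σY : Fin n → ℝ) (hXanti : Antitone σX) (hYanti : Antitone σY)
    (hX : ∃ e : Equiv.Perm (Fin n), ∀ j, σX j = singValsUnordered X (e j))
    (hY : ∃ e : Equiv.Perm (Fin n), ∀ j, σY j = singValsUnordered Y (e j)) :
    (Matrix.trace (Xᴴ * Y)).re ≤ ∑ j : Fin n, σX j * σY j := by
  classical
  obtain ⟨e, he⟩ := hX
  obtain ⟨f, hf⟩ := hY
  set sX := singValsUnordered X with hsX
  set sY := singValsUnordered Y with hsY
  set S1 : Fin n → Fin n → ℝ := fun j k => ‖star (nvec X j) ⬝ᵥ nvec Y k‖ ^ 2 with hS1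
  set S2 : Fin n → Fin n → ℝ := fun j k => ‖star (evec X j) ⬝ᵥ evec Y k‖ ^ 2 with hS2
  -- pointwise bound on the trace terms
  have hpoint : ∀ j k : Fin n,
      ((star (X *ᵥ evec X j) ⬝ᵥ (Y *ᵥ evec Y k)) * (star (evec Y k) ⬝ᵥ evec X j)).re
        ≤ sX j * (sY k * ((S1 j k + S2 j k) / 2)) := by
    intro j k
    have hC : star (X *ᵥ evec X j) ⬝ᵥ (Y *ᵥ evec Y k)
        = ((sX j : ℝ) : ℂ) * (((sY k : ℝ) : ℂ) * (star (nvec X j) ⬝ᵥ nvec Y k)) := by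
      rw [mulVec_evec, mulVec_evec, star_smul, smul_dotProduct, dotProduct_smul]
      rw [RCLike.star_def, Complex.conj_ofReal]
      simp [smul_eq_mul, mul_assoc, mul_left_comm, hsX, hsY]
    set a : ℝ := ‖star (nvec X j) ⬝ᵥ nvec Y k‖ with ha
    set b : ℝ := ‖star (evec X j) ⬝ᵥ evec Y k‖ with hb
    have habs : ‖(star (X *ᵥ evec X j) ⬝ᵥ (Y *ᵥ evec Y k))
        * (star (evec Y k) ⬝ᵥ evec X j)‖ = sX j * (sY k * (a * b)) := by
      rw [norm_mul, hC, norm_mul, norm_mul,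
        Complex.norm_real, Complex.norm_real, Real.norm_eq_abs, Real.norm_eq_abs,
        abs_of_nonneg (sing_nonneg X j), abs_of_nonneg (sing_nonneg Y k),
        abs_dot_flip (evec Y k) (evec X j)]
      ring
    have hre := Complex.re_le_norm ((star (X *ᵥ evec X j) ⬝ᵥ (Y *ᵥ evec Y k))
        * (star (evec Y k) ⬝ᵥ evec X j))
    rw [habs] at hre
    refine hre.trans ?_
    have hab : a * b ≤ (a ^ 2 + b ^ 2) / 2 := by nlinarith [sq_nonneg (a - b)]
    have := mul_le_mul_of_nonneg_left hab (sing_nonneg Y k)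
    have := mul_le_mul_of_nonneg_left this (sing_nonneg X j)
    calc sX j * (sY k * (a * b)) ≤ sX j * (sY k * ((a ^ 2 + b ^ 2) / 2)) := this
      _ = sX j * (sY k * ((S1 j k + S2 j k) / 2)) := rfl
  -- sum bound for a substochastic S
  have hmain : ∀ S : Fin n → Fin n → ℝ, (∀ j k, 0 ≤ S j k) →
      (∀ j, ∑ k, S j k ≤ 1) → (∀ k, ∑ j, S j k ≤ 1) →
      ∑ j : Fin n, ∑ k : Fin n, sX j * (sY k * S j k) ≤ ∑ j : Fin n, σX j * σY j := by
    intro S hS0 hrow hcol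
    have hre : ∑ j : Fin n, ∑ k : Fin n, sX j * (sY k * S j k)
        = ∑ j : Fin n, ∑ k : Fin n, σX j * (σY k * S (e j) (f k)) := by
      rw [← Equiv.sum_comp e (fun j => ∑ k : Fin n, sX j * (sY k * S j k))]
      refine Finset.sum_congr rfl fun j _ => ?_
      rw [← Equiv.sum_comp f (fun k => sX (e j) * (sY k * S (e j) k))]
      exact Finset.sum_congr rfl fun k _ => by rw [he, hf]
    rw [hre]
    refine substoch_fin σX σY hXanti hYanti
      (fun j => he j ▸ sing_nonneg X (e j)) (fun k => hf k ▸ sing_nonneg Y (f k))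
      (fun j k => S (e j) (f k)) (fun j k => hS0 _ _) (fun j => ?_) (fun k => ?_)
    · rw [Equiv.sum_comp f (fun k => S (e j) k)]
      exact hrow _
    · rw [Equiv.sum_comp e (fun j => S j (f k))]
      exact hcol _
  -- substochasticity of S1 and S2
  have hnn : ∀ j k, (0:ℝ) ≤ S1 j k := fun j k => sq_nonneg _
  have hnn2 : ∀ j k, (0:ℝ) ≤ S2 j k := fun j k => sq_nonneg _
  have hx1 : ∀ j : Fin n, (star (nvec X j) ⬝ᵥ nvec X j).re ≤ 1 := by
    intro j
    rw [nvec_dot]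
    split
    · split <;> simp
    · simp
  have hy1 : ∀ k : Fin n, (star (nvec Y k) ⬝ᵥ nvec Y k).re ≤ 1 := by
    intro k
    rw [nvec_dot]
    split
    · split <;> simp
    · simp
  have hvx1 : ∀ j : Fin n, (star (evec X j) ⬝ᵥ evec X j).re ≤ 1 := by
    intro j; rw [evec_dot, if_pos rfl]; simp
  have hvy1 : ∀ k : Fin n, (star (evec Y k) ⬝ᵥ evec Y k).re ≤ 1 := by
    intro k; rw [evec_dot, if_pos rfl]; simp
  have hrow1 : ∀ j, ∑ k, S1 j k ≤ 1 := by
    intro j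
    have : ∀ k, S1 j k = ‖star (nvec Y k) ⬝ᵥ nvec X j‖ ^ 2 := fun k => by
      rw [hS1]; rw [abs_dot_flip]
    rw [Finset.sum_congr rfl fun k _ => this k]
    exact bessel_generic (nvec Y) (singValsUnordered Y) (nvec_dot Y) (nvec X j) (hx1 j)
  have hcol1 : ∀ k, ∑ j, S1 j k ≤ 1 := fun k =>
    bessel_generic (nvec X) (singValsUnordered X) (nvec_dot X) (nvec Y k) (hy1 k)
  have hrow2 : ∀ j, ∑ k, S2 j k ≤ 1 := by
    intro j
    have : ∀ k, S2 j k = ‖star (evec Y k) ⬝ᵥ evec X j‖ ^ 2 := fun k => by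
      rw [hS2]; rw [abs_dot_flip]
    rw [Finset.sum_congr rfl fun k _ => this k]
    exact bessel_generic (evec Y) (fun _ => 1) (fun i k => by
      rw [evec_dot]; split <;> norm_num) (evec X j) (hvx1 j)
  have hcol2 : ∀ k, ∑ j, S2 j k ≤ 1 := fun k =>
    bessel_generic (evec X) (fun _ => 1) (fun i j => by
      rw [evec_dot]; split <;> norm_num) (evec Y k) (hvy1 k)
  -- assemble
  have htr : (Matrix.trace (Xᴴ * Y)).re = ∑ j : Fin n, ∑ k : Fin n,
      ((star (X *ᵥ evec X j) ⬝ᵥ (Y *ᵥ evec Y k)) * (star (evec Y k) ⬝ᵥ evec X j)).re := by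
    rw [trace_repr X Y, Complex.re_sum]
    refine Finset.sum_congr rfl fun j _ => ?_
    rw [Complex.re_sum]
    exact Finset.sum_congr rfl fun k _ => rfl
  rw [htr]
  calc ∑ j : Fin n, ∑ k : Fin n,
        ((star (X *ᵥ evec X j) ⬝ᵥ (Y *ᵥ evec Y k)) * (star (evec Y k) ⬝ᵥ evec X j)).re
      ≤ ∑ j : Fin n, ∑ k : Fin n, sX j * (sY k * ((S1 j k + S2 j k) / 2)) :=
        Finset.sum_le_sum fun j _ => Finset.sum_le_sum fun k _ => hpoint j k
    _ = (∑ j : Fin n, ∑ k : Fin n, sX j * (sY k * S1 j k)) / 2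
        + (∑ j : Fin n, ∑ k : Fin n, sX j * (sY k * S2 j k)) / 2 := by
        rw [Finset.sum_div, Finset.sum_div, ← Finset.sum_add_distrib]
        refine Finset.sum_congr rfl fun j _ => ?_
        rw [Finset.sum_div, Finset.sum_div, ← Finset.sum_add_distrib]
        refine Finset.sum_congr rfl fun k _ => ?_
        ring
    _ ≤ (∑ j : Fin n, σX j * σY j) / 2 + (∑ j : Fin n, σX j * σY j) / 2 := by
        have h1 := hmain S1 hnn hrow1 hcol1
        have h2 := hmain S2 hnn2 hrow2 hcol2
        linarith
    _ = ∑ j : Fin n, σX j * σY j := by ring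

private lemma frob_sq {m n : ℕ} (X : Matrix (Fin m) (Fin n) ℂ) :
    ∑ j : Fin n, singValsUnordered X j ^ 2
      = ∑ i : Fin m, ∑ j : Fin n, ‖X i j‖ ^ 2 := by
  classical
  set hH := Matrix.isHermitian_conjTranspose_mul_self X
  set V : Matrix (Fin n) (Fin n) ℂ := (hH.eigenvectorUnitary : Matrix (Fin n) (Fin n) ℂ)
  have hVu : V * Vᴴ = 1 := by
    rw [← Matrix.star_eq_conjTranspose]
    exact Matrix.mem_unitaryGroup_iff.mp hH.eigenvectorUnitary.2
  have h1 : Matrix.trace (Vᴴ * (Xᴴ * X) * V) = Matrix.trace (Xᴴ * X) := by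
    rw [Matrix.trace_mul_cycle, hVu, Matrix.one_mul]
  have h2 : Matrix.trace (Vᴴ * (Xᴴ * X) * V)
      = ∑ j : Fin n, ((hH.eigenvalues j : ℝ) : ℂ) := by
    rw [h1]; exact hH.trace_eq_sum_eigenvalues
  have h3 : (Matrix.trace (Xᴴ * X)).re = ∑ j : Fin n, hH.eigenvalues j := by
    rw [← h1, h2, Complex.re_sum]
    simp
  have h4 : (Matrix.trace (Xᴴ * X)).re = ∑ i : Fin m, ∑ j : Fin n, ‖X i j‖ ^ 2 := by
    have h0 : Matrix.trace (Xᴴ * X)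
        = ∑ j : Fin n, ∑ i : Fin m, (starRingEnd ℂ) (X i j) * X i j := by
      simp [Matrix.trace, Matrix.diag, Matrix.mul_apply, Matrix.conjTranspose_apply]
    have h5 : ∀ (j : Fin n) (i : Fin m),
        ((starRingEnd ℂ) (X i j) * X i j).re = ‖X i j‖ ^ 2 := by
      intro j i
      rw [Complex.sq_norm, ← Complex.ofReal_re (Complex.normSq (X i j)),
        Complex.normSq_eq_conj_mul_self]
    calc (Matrix.trace (Xᴴ * X)).re
        = ∑ j : Fin n, ∑ i : Fin m, ((starRingEnd ℂ) (X i j) * X i j).re := by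
          rw [h0, Complex.re_sum]
          exact Finset.sum_congr rfl fun j _ => Complex.re_sum _ _
      _ = ∑ j : Fin n, ∑ i : Fin m, ‖X i j‖ ^ 2 :=
          Finset.sum_congr rfl fun j _ => Finset.sum_congr rfl fun i _ => h5 j i
      _ = ∑ i : Fin m, ∑ j : Fin n, ‖X i j‖ ^ 2 := Finset.sum_comm
  rw [← h4, h3]
  exact Finset.sum_congr rfl fun j _ => sing_sq X j

private lemma rhs_expand {m n : ℕ} (X Y : Matrix (Fin m) (Fin n) ℂ) :
    ∑ i : Fin m, ∑ j : Fin n, ‖X i j - Y i j‖ ^ 2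
      = (∑ i : Fin m, ∑ j : Fin n, ‖X i j‖ ^ 2)
        + (∑ i : Fin m, ∑ j : Fin n, ‖Y i j‖ ^ 2)
        - 2 * (Matrix.trace (Xᴴ * Y)).re := by
  have htr : (Matrix.trace (Xᴴ * Y)).re
      = ∑ i : Fin m, ∑ j : Fin n, ((starRingEnd ℂ) (X i j) * Y i j).re := by
    have h0 : Matrix.trace (Xᴴ * Y)
        = ∑ j : Fin n, ∑ i : Fin m, (starRingEnd ℂ) (X i j) * Y i j := by
      simp [Matrix.trace, Matrix.diag, Matrix.mul_apply, Matrix.conjTranspose_apply]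
    calc (Matrix.trace (Xᴴ * Y)).re
        = ∑ j : Fin n, ∑ i : Fin m, ((starRingEnd ℂ) (X i j) * Y i j).re := by
          rw [h0, Complex.re_sum]
          exact Finset.sum_congr rfl fun j _ => Complex.re_sum _ _
      _ = ∑ i : Fin m, ∑ j : Fin n, ((starRingEnd ℂ) (X i j) * Y i j).re := Finset.sum_comm
  rw [htr, Finset.mul_sum, ← Finset.sum_add_distrib, ← Finset.sum_sub_distrib]
  refine Finset.sum_congr rfl fun i _ => ?_
  rw [Finset.mul_sum, ← Finset.sum_add_distrib, ← Finset.sum_sub_distrib]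
  refine Finset.sum_congr rfl fun j _ => ?_
  simp only [Complex.sq_norm, Complex.normSq_apply, Complex.mul_re, Complex.sub_re,
    Complex.sub_im, RCLike.star_def, Complex.conj_re, Complex.conj_im]
  ring

/-- **Mirsky's inequality.** If `σX` and `σY` are the singular values of `X` and `Y` in
nonincreasing order, then the ℓ²-distance of the singular value vectors is bounded by the
Frobenius norm of `X - Y`. -/
theorem mirsky_singular_value_perturbation
    (m n : ℕ) (X Y : Matrix (Fin m) (Fin n) ℂ)
    (σX σY : Fin n → ℝ)
    (hXanti : Antitone σX) (hYanti : Antitone σY)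
    (hX : ∃ e : Equiv.Perm (Fin n), ∀ j, σX j = singValsUnordered X (e j))
    (hY : ∃ e : Equiv.Perm (Fin n), ∀ j, σY j = singValsUnordered Y (e j)) :
    Real.sqrt (∑ i : Fin (min m n),
        |σX (Fin.castLE (min_le_right m n) i) - σY (Fin.castLE (min_le_right m n) i)| ^ 2)
      ≤ Real.sqrt (∑ i : Fin m, ∑ j : Fin n, ‖X i j - Y i j‖ ^ 2) := by
  obtain ⟨e, he⟩ := hX
  obtain ⟨f, hf⟩ := hY
  have hT := vonNeumann X Y σX σY hXanti hYanti ⟨e, he⟩ ⟨f, hf⟩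
  have hXsq : ∑ j : Fin n, σX j ^ 2
      = ∑ i : Fin m, ∑ j : Fin n, ‖X i j‖ ^ 2 := by
    rw [← frob_sq X, ← Equiv.sum_comp e (fun j => singValsUnordered X j ^ 2)]
    exact Finset.sum_congr rfl fun j _ => by rw [he]
  have hYsq : ∑ j : Fin n, σY j ^ 2
      = ∑ i : Fin m, ∑ j : Fin n, ‖Y i j‖ ^ 2 := by
    rw [← frob_sq Y, ← Equiv.sum_comp f (fun j => singValsUnordered Y j ^ 2)]
    exact Finset.sum_congr rfl fun j _ => by rw [hf]
  -- partial sum bounded by full sum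
  have step1 : ∑ i : Fin (min m n),
      |σX (Fin.castLE (min_le_right m n) i) - σY (Fin.castLE (min_le_right m n) i)| ^ 2
      ≤ ∑ j : Fin n, (σX j - σY j) ^ 2 := by
    have habs : ∀ i : Fin (min m n),
        |σX (Fin.castLE (min_le_right m n) i) - σY (Fin.castLE (min_le_right m n) i)| ^ 2
        = (fun j => (σX j - σY j) ^ 2) (Fin.castLE (min_le_right m n) i) := fun i => by
      rw [sq_abs]
    rw [Finset.sum_congr rfl fun i _ => habs i]
    calc ∑ i : Fin (min m n), (fun j => (σX j - σY j) ^ 2) (Fin.castLE (min_le_right m n) i)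
        = ∑ j ∈ Finset.univ.map (Fin.castLEEmb (min_le_right m n)), (σX j - σY j) ^ 2 := by
          rw [Finset.sum_map]
          exact Finset.sum_congr rfl fun i _ => by simp
      _ ≤ ∑ j : Fin n, (σX j - σY j) ^ 2 :=
          Finset.sum_le_sum_of_subset_of_nonneg (Finset.subset_univ _)
            (fun j _ _ => sq_nonneg _)
  have step2 : ∑ j : Fin n, (σX j - σY j) ^ 2
      ≤ ∑ i : Fin m, ∑ j : Fin n, ‖X i j - Y i j‖ ^ 2 := by
    have hexp : ∑ j : Fin n, (σX j - σY j) ^ 2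
        = (∑ j : Fin n, σX j ^ 2) + (∑ j : Fin n, σY j ^ 2)
          - 2 * ∑ j : Fin n, σX j * σY j := by
      rw [Finset.mul_sum, ← Finset.sum_add_distrib, ← Finset.sum_sub_distrib]
      exact Finset.sum_congr rfl fun j _ => by ring
    rw [hexp, rhs_expand X Y, hXsq, hYsq]
    linarith
  exact Real.sqrt_le_sqrt (step1.trans step2)
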